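/- Let G be a finite directed graph, let r be the number of vertices of G having in-degree zero, and suppose G admits a path-and-cycle cover with exactly p paths (counting single vertices as paths) together with any number of cycles. Then G admits a necklace cover with exactly r open necklaces and at most p − r pendant leaves. -/

import Mathlib

open scoped Classical

variable {V : Type*} [DecidableEq V]

/-- In-degree of `v` in the digraph with edge set `E`. -/
def indeg (E : Finset (V × V)) (v : V) : ℕ := (E.filter (fun e => e.2 = v)).card

/-- Out-degree of `v` in the digraph with edge set `E`. -/
def outdeg (E : Finset (V × V)) (v : V) : ℕ := (E.filter (fun e => e.1 = v)).card

/-- `l` is a simple directed path (possibly a single vertex) in the digraph `E`. -/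
def IsDiPath (E : Finset (V × V)) (l : List V) : Prop :=
  l ≠ [] ∧ l.Nodup ∧ l.Chain' (fun u v => (u, v) ∈ E)

/-- `l` is a simple directed cycle in the digraph `E`. -/
def IsDiCycle (E : Finset (V × V)) (l : List V) : Prop :=
  ∃ h : l ≠ [], l.Nodup ∧ l.Chain' (fun u v => (u, v) ∈ E) ∧
    (l.getLast h, l.head h) ∈ E

/-- A path-and-cycle cover (PC cover) of the digraph `E`. -/
structure PCCover (E : Finset (V × V)) where
  paths : Finset (List V)
  cycles : Finset (List V)
  paths_are : ∀ l ∈ paths, IsDiPath E l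
  cycles_are : ∀ l ∈ cycles, IsDiCycle E l
  disj : Disjoint paths cycles
  pairwiseDisj : ∀ l₁ ∈ paths ∪ cycles, ∀ l₂ ∈ paths ∪ cycles, l₁ ≠ l₂ → ∀ v ∈ l₁, v ∉ l₂
  covers : ∀ v : V, ∃ l ∈ paths ∪ cycles, v ∈ l

/-- Edge set of the split bipartite graph of the digraph `E`, on vertex set `V ⊕ V`
(`Sum.inl` is the left copy `f_L`, `Sum.inr` the right copy `f_R`). -/
def splitEdges (E : Finset (V × V)) : Finset ((V ⊕ V) × (V ⊕ V)) :=
  E.image (fun e => (Sum.inl e.1, Sum.inr e.2))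

/-- A set of edges is a matching if no two of its edges share an endpoint. -/
def IsMatching {W : Type*} (M : Finset (W × W)) : Prop :=
  ∀ e₁ ∈ M, ∀ e₂ ∈ M, e₁ ≠ e₂ →
    e₁.1 ≠ e₂.1 ∧ e₁.1 ≠ e₂.2 ∧ e₁.2 ≠ e₂.1 ∧ e₁.2 ≠ e₂.2

/-- The set `F ⊆ E` of edges of `G` pulled back from a matching of the split bipartite graph. -/
def pullback (E : Finset (V × V)) (M : Finset ((V ⊕ V) × (V ⊕ V))) : Finset (V × V) :=
  E.filter (fun e => (Sum.inl e.1, Sum.inr e.2) ∈ M)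

/-- Weak reachability (reachability after forgetting edge directions) in the digraph `F`. -/
def WReach (F : Finset (V × V)) (a b : V) : Prop :=
  Relation.ReflTransGen (fun x y => (x, y) ∈ F ∨ (y, x) ∈ F) a b

/-- `H = (verts, edges)` is a necklace of the digraph `E`: a weakly connected subgraph of `E`
in which every vertex has in-degree at most one. -/
def IsNecklace (E : Finset (V × V)) (H : Finset V × Finset (V × V)) : Prop :=
  H.1.Nonempty ∧ H.2 ⊆ E ∧ (∀ e ∈ H.2, e.1 ∈ H.1 ∧ e.2 ∈ H.1) ∧
  (∀ a ∈ H.1, ∀ b ∈ H.1,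
    Relation.ReflTransGen (fun x y => (x, y) ∈ H.2 ∨ (y, x) ∈ H.2) a b) ∧
  (∀ v ∈ H.1, indeg H.2 v ≤ 1)

/-- A necklace is closed if it contains a directed cycle (and open otherwise). -/
def IsClosedNecklace (H : Finset V × Finset (V × V)) : Prop :=
  ∃ l : List V, IsDiCycle H.2 l

/-- `C` is a necklace cover of the digraph `E`: a collection of necklaces with pairwise
disjoint vertex sets covering every vertex. -/
def IsNecklaceCover (E : Finset (V × V)) (C : Finset (Finset V × Finset (V × V))) : Prop :=
  (∀ H ∈ C, IsNecklace E H) ∧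
  (∀ H₁ ∈ C, ∀ H₂ ∈ C, H₁ ≠ H₂ → Disjoint H₁.1 H₂.1) ∧
  (∀ v : V, ∃ H ∈ C, v ∈ H.1)

/-- `N_O`: the number of open necklaces of the cover `C`. -/
noncomputable def numOpen (C : Finset (Finset V × Finset (V × V))) : ℕ :=
  (C.filter (fun H => ¬ IsClosedNecklace H)).card

/-- Total number of vertices of out-degree zero within their necklace, over the cover `C`. -/
def numSinks (C : Finset (Finset V × Finset (V × V))) : ℕ :=
  ∑ H ∈ C, (H.1.filter (fun v => outdeg H.2 v = 0)).card

/-- `N_L`: the number of pendant leaves of the cover `C` (total number of out-degree-zero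
vertices within their necklace, minus the number of open necklaces). -/
noncomputable def numLeaves (C : Finset (Finset V × Finset (V × V))) : ℕ :=
  numSinks C - numOpen C

/-! ### Auxiliary lemmas -/

section Aux

lemma indeg_mono {F F' : Finset (V × V)} (h : F ⊆ F') (v : V) : indeg F v ≤ indeg F' v :=
  Finset.card_le_card (Finset.filter_subset_filter _ h)

lemma outdeg_mono {F F' : Finset (V × V)} (h : F ⊆ F') (v : V) : outdeg F v ≤ outdeg F' v :=
  Finset.card_le_card (Finset.filter_subset_filter _ h)

lemma indeg_insert {F : Finset (V × V)} {e : V × V} (he : e ∉ F) (v : V) :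
    indeg (insert e F) v = indeg F v + (if e.2 = v then 1 else 0) := by
  unfold indeg
  rw [Finset.filter_insert]
  split_ifs with h
  · exact Finset.card_insert_of_notMem (fun hc => he (Finset.mem_filter.mp hc).1)
  · rfl

lemma indeg_union {F F' : Finset (V × V)} (h : Disjoint F F') (v : V) :
    indeg (F ∪ F') v = indeg F v + indeg F' v := by
  unfold indeg
  rw [Finset.filter_union, Finset.card_union_of_disjoint
    (Finset.disjoint_filter_filter h)]

lemma exists_in_edge {F : Finset (V × V)} {v : V} (h : indeg F v ≠ 0) :
    ∃ w, (w, v) ∈ F := by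
  have hne : (F.filter (fun e => e.2 = v)).Nonempty :=
    Finset.card_pos.mp (Nat.pos_of_ne_zero h)
  obtain ⟨⟨a, b⟩, hab⟩ := hne
  rw [Finset.mem_filter] at hab
  obtain ⟨h1, h2⟩ := hab
  have hb : b = v := h2
  subst hb
  exact ⟨a, h1⟩

lemma indeg_eq_zero_iff {F : Finset (V × V)} {v : V} :
    indeg F v = 0 ↔ ∀ w, (w, v) ∉ F := by
  constructor
  · intro h w hw
    have : (w, v) ∈ F.filter (fun e => e.2 = v) := Finset.mem_filter.mpr ⟨hw, rfl⟩
    rw [indeg, Finset.card_eq_zero] at h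
    simp [h] at this
  · intro h
    rw [indeg, Finset.card_eq_zero, Finset.eq_empty_iff_forall_notMem]
    rintro ⟨a, b⟩ hab
    rw [Finset.mem_filter] at hab
    have hb : b = v := hab.2
    subst hb
    exact h a hab.1

lemma mem_le_getLast {f : V → ℕ} :
    ∀ (l : List V) (hl : l ≠ []), l.Chain' (fun a b => f a < f b) →
      ∀ x ∈ l, f x ≤ f (l.getLast hl)
  | [], hl => absurd rfl hl
  | [a], _ => by
      intro _ x hx
      simp at hx
      simp [hx]
  | a :: b :: t, _ => by
      intro hc x hx
      simp only [List.Chain', List.isChain_cons_cons] at hc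
      have ih := mem_le_getLast (b :: t) (by simp) hc.2
      rw [List.getLast_cons (by simp : (b :: t) ≠ [])]
      rcases List.mem_cons.mp hx with rfl | hx
      · exact le_trans (le_of_lt hc.1) (ih b (by simp))
      · exact ih x hx

lemma no_dicycle_of_rank {F : Finset (V × V)} {f : V → ℕ}
    (hf : ∀ e ∈ F, f e.1 < f e.2) (l : List V) : ¬ IsDiCycle F l := by
  rintro ⟨hl, _, hc, hlast⟩
  have hc' : l.Chain' (fun a b => f a < f b) :=
    List.IsChain.imp (fun a b hab => hf (a, b) hab) hc
  have h1 : f (l.head hl) ≤ f (l.getLast hl) :=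
    mem_le_getLast l hl hc' _ (List.head_mem hl)
  have h2 : f (l.getLast hl) < f (l.head hl) := hf _ hlast
  omega

lemma wreach_mono {F F' : Finset (V × V)} (h : F ⊆ F') {a b : V}
    (hr : Relation.ReflTransGen (fun x y => (x, y) ∈ F ∨ (y, x) ∈ F) a b) :
    Relation.ReflTransGen (fun x y => (x, y) ∈ F' ∨ (y, x) ∈ F') a b :=
  Relation.ReflTransGen.mono (fun x y (hxy : (x, y) ∈ F ∨ (y, x) ∈ F) => hxy.imp (@h _) (@h _)) a b hr

lemma wreach_symm {F : Finset (V × V)} {a b : V}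
    (hr : Relation.ReflTransGen (fun x y => (x, y) ∈ F ∨ (y, x) ∈ F) a b) :
    Relation.ReflTransGen (fun x y => (x, y) ∈ F ∨ (y, x) ∈ F) b a := by
  have : Symmetric (fun x y => (x, y) ∈ F ∨ (y, x) ∈ F) := fun x y hxy => hxy.symm
  haveI : Std.Symm (fun x y : V => (x, y) ∈ F ∨ (y, x) ∈ F) := ⟨this⟩
  exact Std.Symm.symm _ _ hr

/-- The consecutive-pairs edge set of a list. -/
def pathEdges : List V → Finset (V × V)
  | [] => ∅
  | [_] => ∅
  | a :: b :: t => insert (a, b) (pathEdges (b :: t))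

lemma pathEdges_cons_subset (a : V) (t : List V) : pathEdges t ⊆ pathEdges (a :: t) := by
  match t with
  | [] => simp [pathEdges]
  | b :: t' => exact fun e he => by simp [pathEdges, he]

lemma mem_pathEdges : ∀ (l : List V) (e : V × V), e ∈ pathEdges l →
    e.1 ∈ l ∧ e.2 ∈ l.tail
  | [], e => by simp [pathEdges]
  | [_], e => by simp [pathEdges]
  | a :: b :: t, e => by
      intro he
      rw [pathEdges, Finset.mem_insert] at he
      rcases he with rfl | he
      · simp
      · have := mem_pathEdges (b :: t) e he
        refine ⟨List.mem_cons_of_mem _ this.1, ?_⟩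
        simp only [List.tail_cons]
        exact List.mem_cons_of_mem _ (by simpa using this.2)

lemma pathEdges_subset {E : Finset (V × V)} :
    ∀ (l : List V), l.Chain' (fun u v => (u, v) ∈ E) → pathEdges l ⊆ E
  | [] => by simp [pathEdges]
  | [_] => by simp [pathEdges]
  | a :: b :: t => by
      intro hc
      simp only [List.Chain', List.isChain_cons_cons] at hc
      rw [pathEdges]
      intro e he
      rcases Finset.mem_insert.mp he with rfl | he
      · exact hc.1
      · exact pathEdges_subset (b :: t) hc.2 he

lemma chain'_pathEdges : ∀ (l : List V), l.Chain' (fun u v => (u, v) ∈ pathEdges l)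
  | [] => List.isChain_nil
  | [a] => List.isChain_singleton a
  | a :: b :: t => by
      simp only [List.Chain', List.isChain_cons_cons]
      refine ⟨by simp [pathEdges], ?_⟩
      exact List.IsChain.imp (fun x y hxy => pathEdges_cons_subset a (b :: t) hxy)
        (chain'_pathEdges (b :: t))

lemma outdeg_ne_zero {F : Finset (V × V)} {v w : V} (h : (v, w) ∈ F) : outdeg F v ≠ 0 := by
  intro hc
  rw [outdeg, Finset.card_eq_zero] at hc
  have : (v, w) ∈ F.filter (fun e => e.1 = v) := Finset.mem_filter.mpr ⟨h, rfl⟩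
  simp [hc] at this

lemma indeg_pathEdges_of_not_mem_tail {l : List V} {v : V} (h : v ∉ l.tail) :
    indeg (pathEdges l) v = 0 := by
  rw [indeg_eq_zero_iff]
  intro w hw
  exact h (mem_pathEdges l (w, v) hw).2

lemma pathEdges_src_mem_self : ∀ (l : List V) (e : V × V), e ∈ pathEdges l → e.1 ∈ l :=
  fun l e he => (mem_pathEdges l e he).1

lemma indeg_pathEdges_of_mem_tail :
    ∀ (l : List V), l.Nodup → ∀ v ∈ l.tail, indeg (pathEdges l) v = 1
  | [] => by simp
  | [a] => by simp
  | a :: b :: t => by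
      intro hnd v hv
      simp only [List.tail_cons] at hv
      have hnd' : (b :: t).Nodup := hnd.of_cons
      have hab : (a, b) ∉ pathEdges (b :: t) := by
        intro hc
        have := (mem_pathEdges _ _ hc).1
        simp only at this
        exact (List.Nodup.notMem hnd) this
      rw [pathEdges, indeg_insert hab]
      by_cases hvb : b = v
      · subst hvb
        rw [indeg_pathEdges_of_not_mem_tail (by simpa using List.Nodup.notMem hnd')]
        simp
      · have hv' : v ∈ t := by
          rcases List.mem_cons.mp hv with rfl | h
          · exact absurd rfl hvb
          · exact h
        rw [indeg_pathEdges_of_mem_tail (b :: t) hnd' v (by simpa using hv')]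
        simp [hvb]

lemma exists_out_edge :
    ∀ (l : List V) (hl : l ≠ []) (v : V), v ∈ l → v ≠ l.getLast hl →
      ∃ w, (v, w) ∈ pathEdges l
  | [], hl => absurd rfl hl
  | [a], _ => by
      intro v hv hne
      simp at hv
      simp [hv] at hne
  | a :: b :: t, _ => by
      intro v hv hne
      rcases List.mem_cons.mp hv with rfl | hv'
      · exact ⟨b, by simp [pathEdges]⟩
      · have hgl : (a :: b :: t).getLast (by simp) = (b :: t).getLast (by simp) :=
          List.getLast_cons (by simp)
        obtain ⟨w, hw⟩ := exists_out_edge (b :: t) (by simp) v hv' (by rw [hgl] at hne; exact hne)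
        exact ⟨w, pathEdges_cons_subset a (b :: t) hw⟩

lemma pathEdges_rank :
    ∀ (l : List V), l.Nodup → ∀ e ∈ pathEdges l, l.idxOf e.1 < l.idxOf e.2
  | [] => by simp [pathEdges]
  | [a] => by simp [pathEdges]
  | a :: b :: t => by
      intro hnd e he
      rw [pathEdges, Finset.mem_insert] at he
      have ha : a ∉ b :: t := List.Nodup.notMem hnd
      rcases he with rfl | he
      · simp only [List.idxOf_cons_self]
        have hba : a ≠ b := fun hc => ha (by simp [hc])
        rw [List.idxOf_cons_ne _ hba]
        omega
      · have h1 : e.1 ∈ b :: t := pathEdges_src_mem_self _ _ he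
        have h2 : e.2 ∈ b :: t := List.mem_of_mem_tail (mem_pathEdges _ _ he).2
        have hne1 : a ≠ e.1 := fun hc => ha (hc ▸ h1)
        have hne2 : a ≠ e.2 := fun hc => ha (hc ▸ h2)
        rw [List.idxOf_cons_ne _ hne1, List.idxOf_cons_ne _ hne2]
        have := pathEdges_rank (b :: t) hnd.of_cons e he
        omega

lemma head_wreach :
    ∀ (l : List V) (hl : l ≠ []) (b : V), b ∈ l →
      Relation.ReflTransGen (fun x y => (x, y) ∈ pathEdges l ∨ (y, x) ∈ pathEdges l)
        (l.head hl) b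
  | [], hl => absurd rfl hl
  | [a], _ => by
      intro b hb
      simp at hb
      subst hb
      exact Relation.ReflTransGen.refl
  | a :: c :: t, _ => by
      intro b hb
      rcases List.mem_cons.mp hb with rfl | hb'
      · exact Relation.ReflTransGen.refl
      · have step : Relation.ReflTransGen
            (fun x y => (x, y) ∈ pathEdges (a :: c :: t) ∨ (y, x) ∈ pathEdges (a :: c :: t))
            a c := Relation.ReflTransGen.single (Or.inl (by simp [pathEdges]))
        have ih := head_wreach (c :: t) (by simp) b hb'
        exact step.trans (wreach_mono (pathEdges_cons_subset a (c :: t)) ih)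

lemma pathEdges_wreach {l : List V} (hl : l ≠ []) {a b : V} (ha : a ∈ l) (hb : b ∈ l) :
    Relation.ReflTransGen (fun x y => (x, y) ∈ pathEdges l ∨ (y, x) ∈ pathEdges l) a b :=
  (wreach_symm (head_wreach l hl a ha)).trans (head_wreach l hl b hb)

/-- The necklace associated to a path list. -/
def pathNeck (l : List V) : Finset V × Finset (V × V) := (l.toFinset, pathEdges l)

/-- Edge set of the necklace associated to a cycle list. -/
def cycEdges : List V → Finset (V × V)
  | [] => ∅
  | a :: t => insert ((a :: t).getLast (List.cons_ne_nil a t), a) (pathEdges (a :: t))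

/-- The necklace associated to a cycle list. -/
def cycNeck (l : List V) : Finset V × Finset (V × V) := (l.toFinset, cycEdges l)

lemma pathNeck_isNecklace {E : Finset (V × V)} {l : List V} (h : IsDiPath E l) :
    IsNecklace E (pathNeck l) := by
  obtain ⟨hne, hnd, hch⟩ := h
  refine ⟨⟨l.head hne, List.mem_toFinset.mpr (List.head_mem hne)⟩,
    pathEdges_subset l hch, ?_, ?_, ?_⟩
  · intro e he
    exact ⟨List.mem_toFinset.mpr (mem_pathEdges l e he).1,
      List.mem_toFinset.mpr (List.mem_of_mem_tail (mem_pathEdges l e he).2)⟩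
  · intro a ha b hb
    exact pathEdges_wreach hne (List.mem_toFinset.mp ha) (List.mem_toFinset.mp hb)
  · intro v hv
    cases l with
    | nil => exact absurd rfl hne
    | cons a t =>
      have hv' : v ∈ a :: t := List.mem_toFinset.mp hv
      rcases List.mem_cons.mp hv' with rfl | h2
      · rw [show (pathNeck (v :: t)).2 = pathEdges (v :: t) from rfl,
          indeg_pathEdges_of_not_mem_tail (by simpa using List.Nodup.notMem hnd)]
        omega
      · rw [show (pathNeck (a :: t)).2 = pathEdges (a :: t) from rfl,
          indeg_pathEdges_of_mem_tail (a :: t) hnd v (by simpa using h2)]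

lemma pathNeck_rank {l : List V} (hnd : l.Nodup) :
    ∃ f : V → ℕ, ∀ e ∈ (pathNeck l).2, f e.1 < f e.2 :=
  ⟨fun v => l.idxOf v, fun e he => pathEdges_rank l hnd e he⟩

lemma pathNeck_head_unique {E : Finset (V × V)} {l : List V} (h : IsDiPath E l) :
    ∃! v, v ∈ (pathNeck l).1 ∧ indeg (pathNeck l).2 v = 0 := by
  obtain ⟨hne, hnd, _⟩ := h
  cases l with
  | nil => exact absurd rfl hne
  | cons a t =>
    refine ⟨a, ⟨List.mem_toFinset.mpr (by simp), ?_⟩, ?_⟩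
    · exact indeg_pathEdges_of_not_mem_tail (by simpa using List.Nodup.notMem hnd)
    · rintro v ⟨hv, hv0⟩
      have hv' : v ∈ a :: t := List.mem_toFinset.mp hv
      rcases List.mem_cons.mp hv' with rfl | h2
      · rfl
      · rw [show (pathNeck (a :: t)).2 = pathEdges (a :: t) from rfl,
          indeg_pathEdges_of_mem_tail (a :: t) hnd v (by simpa using h2)] at hv0
        exact absurd hv0 one_ne_zero

lemma pathNeck_sinks {E : Finset (V × V)} {l : List V} (h : IsDiPath E l) :
    ((pathNeck l).1.filter (fun v => outdeg (pathNeck l).2 v = 0)).card ≤ 1 := by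
  obtain ⟨hne, hnd, _⟩ := h
  have hsub : (pathNeck l).1.filter (fun v => outdeg (pathNeck l).2 v = 0) ⊆
      {l.getLast hne} := by
    intro v hv
    rw [Finset.mem_filter] at hv
    rw [Finset.mem_singleton]
    by_contra hc
    obtain ⟨w, hw⟩ := exists_out_edge l hne v (List.mem_toFinset.mp hv.1) hc
    exact outdeg_ne_zero hw hv.2
  calc _ ≤ ({l.getLast hne} : Finset V).card := Finset.card_le_card hsub
    _ = 1 := Finset.card_singleton _

lemma cycEdges_eq (a : V) (t : List V) :
    cycEdges (a :: t) =
      insert ((a :: t).getLast (List.cons_ne_nil a t), a) (pathEdges (a :: t)) := rfl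

lemma cycEdges_last_not_mem {a : V} {t : List V} (hnd : (a :: t).Nodup) :
    ((a :: t).getLast (List.cons_ne_nil a t), a) ∉ pathEdges (a :: t) := by
  intro hc
  have := (mem_pathEdges _ _ hc).2
  simp only [List.tail_cons] at this
  exact (List.Nodup.notMem hnd) this

lemma cycNeck_indeg {E : Finset (V × V)} {l : List V} (h : IsDiCycle E l) :
    ∀ v ∈ (cycNeck l).1, indeg (cycNeck l).2 v = 1 := by
  obtain ⟨hne, hnd, _, _⟩ := h
  cases l with
  | nil => exact absurd rfl hne
  | cons a t =>
    intro v hv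
    have hv' : v ∈ a :: t := List.mem_toFinset.mp hv
    rw [show (cycNeck (a :: t)).2 = cycEdges (a :: t) from rfl, cycEdges_eq,
      indeg_insert (cycEdges_last_not_mem hnd)]
    rcases List.mem_cons.mp hv' with rfl | h2
    · rw [indeg_pathEdges_of_not_mem_tail (by simpa using List.Nodup.notMem hnd)]
      simp
    · rw [indeg_pathEdges_of_mem_tail (a :: t) hnd v (by simpa using h2)]
      have : a ≠ v := fun hc => (List.Nodup.notMem hnd) (hc ▸ h2)
      simp [this]

lemma cycNeck_isNecklace {E : Finset (V × V)} {l : List V} (h : IsDiCycle E l) :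
    IsNecklace E (cycNeck l) := by
  obtain ⟨hne, hnd, hch, hlast⟩ := h
  cases l with
  | nil => exact absurd rfl hne
  | cons a t =>
    refine ⟨⟨a, List.mem_toFinset.mpr (by simp)⟩, ?_, ?_, ?_, ?_⟩
    · rw [show (cycNeck (a :: t)).2 = cycEdges (a :: t) from rfl, cycEdges_eq]
      intro e he
      rcases Finset.mem_insert.mp he with rfl | he
      · exact hlast
      · exact pathEdges_subset _ hch he
    · rw [show (cycNeck (a :: t)).2 = cycEdges (a :: t) from rfl, cycEdges_eq]
      intro e he
      rcases Finset.mem_insert.mp he with rfl | he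
      · exact ⟨List.mem_toFinset.mpr (List.getLast_mem _),
          List.mem_toFinset.mpr (by simp)⟩
      · exact ⟨List.mem_toFinset.mpr (mem_pathEdges _ _ he).1,
          List.mem_toFinset.mpr (List.mem_of_mem_tail (mem_pathEdges _ _ he).2)⟩
    · intro x hx y hy
      have hsub : pathEdges (a :: t) ⊆ (cycNeck (a :: t)).2 := by
        rw [show (cycNeck (a :: t)).2 = cycEdges (a :: t) from rfl, cycEdges_eq]
        exact Finset.subset_insert _ _
      exact wreach_mono hsub
        (pathEdges_wreach (by simp) (List.mem_toFinset.mp hx) (List.mem_toFinset.mp hy))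
    · intro v hv
      rw [cycNeck_indeg ⟨(by simp : (a :: t) ≠ []), hnd, hch, hlast⟩ v hv]

lemma cycNeck_closed {E : Finset (V × V)} {l : List V} (h : IsDiCycle E l) :
    IsClosedNecklace (cycNeck l) := by
  obtain ⟨hne, hnd, hch, hlast⟩ := h
  cases l with
  | nil => exact absurd rfl hne
  | cons a t =>
    refine ⟨a :: t, (by simp : (a :: t) ≠ []), hnd, ?_, ?_⟩
    · refine List.IsChain.imp ?_ (chain'_pathEdges (a :: t))
      intro x y hxy
      rw [show (cycNeck (a :: t)).2 = cycEdges (a :: t) from rfl, cycEdges_eq]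
      exact Finset.mem_insert_of_mem hxy
    · rw [show (cycNeck (a :: t)).2 = cycEdges (a :: t) from rfl, cycEdges_eq]
      exact Finset.mem_insert_self _ _

lemma cycNeck_sinks {E : Finset (V × V)} {l : List V} (h : IsDiCycle E l) :
    ((cycNeck l).1.filter (fun v => outdeg (cycNeck l).2 v = 0)).card = 0 := by
  obtain ⟨hne, hnd, hch, hlast⟩ := h
  cases l with
  | nil => exact absurd rfl hne
  | cons a t =>
    rw [Finset.card_eq_zero, Finset.eq_empty_iff_forall_notMem]
    intro v hv
    rw [Finset.mem_filter] at hv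
    have hv' : v ∈ a :: t := List.mem_toFinset.mp hv.1
    by_cases hlastv : v = (a :: t).getLast (List.cons_ne_nil a t)
    · have : (v, a) ∈ (cycNeck (a :: t)).2 := by
        rw [show (cycNeck (a :: t)).2 = cycEdges (a :: t) from rfl, cycEdges_eq, hlastv]
        exact Finset.mem_insert_self _ _
      exact outdeg_ne_zero this hv.2
    · obtain ⟨w, hw⟩ := exists_out_edge (a :: t) (List.cons_ne_nil a t) v hv' hlastv
      have : (v, w) ∈ (cycNeck (a :: t)).2 := by
        rw [show (cycNeck (a :: t)).2 = cycEdges (a :: t) from rfl, cycEdges_eq]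
        exact Finset.mem_insert_of_mem hw
      exact outdeg_ne_zero this hv.2

/-- The invariant maintained through the merging process: a necklace cover in which every
necklace either is "open with structure" (admits a rank function and has a unique head) or is
closed with all in-degrees equal to one. -/
def Good (E : Finset (V × V)) (D : Finset (Finset V × Finset (V × V))) : Prop :=
  IsNecklaceCover E D ∧
  ∀ H ∈ D, ((∃ f : V → ℕ, ∀ e ∈ H.2, f e.1 < f e.2) ∧
              ∃! v, v ∈ H.1 ∧ indeg H.2 v = 0) ∨
           (IsClosedNecklace H ∧ ∀ v ∈ H.1, indeg H.2 v = 1)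

lemma initial_good {E : Finset (V × V)} (C : PCCover E) :
    ∃ D, Good E D ∧ numSinks D ≤ C.paths.card := by
  set A := C.paths.image pathNeck with hA
  set B := C.cycles.image cycNeck with hB
  refine ⟨A ∪ B, ⟨⟨?_, ?_, ?_⟩, ?_⟩, ?_⟩
  · -- each element is a necklace
    intro H hH
    rcases Finset.mem_union.mp hH with h | h
    · obtain ⟨l, hl, rfl⟩ := Finset.mem_image.mp h
      exact pathNeck_isNecklace (C.paths_are l hl)
    · obtain ⟨l, hl, rfl⟩ := Finset.mem_image.mp h
      exact cycNeck_isNecklace (C.cycles_are l hl)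
  · -- pairwise disjoint vertex sets
    intro H₁ hH₁ H₂ hH₂ hne
    have key : ∀ K ∈ A ∪ B, ∃ l ∈ C.paths ∪ C.cycles, K.1 = l.toFinset ∧
        (K = pathNeck l ∧ l ∈ C.paths ∨ K = cycNeck l ∧ l ∈ C.cycles) := by
      intro K hK
      rcases Finset.mem_union.mp hK with h | h
      · obtain ⟨l, hl, rfl⟩ := Finset.mem_image.mp h
        exact ⟨l, Finset.mem_union_left _ hl, rfl, Or.inl ⟨rfl, hl⟩⟩
      · obtain ⟨l, hl, rfl⟩ := Finset.mem_image.mp h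
        exact ⟨l, Finset.mem_union_right _ hl, rfl, Or.inr ⟨rfl, hl⟩⟩
    obtain ⟨l₁, hl₁, hv₁, hc₁⟩ := key H₁ hH₁
    obtain ⟨l₂, hl₂, hv₂, hc₂⟩ := key H₂ hH₂
    have hll : l₁ ≠ l₂ := by
      rintro rfl
      rcases hc₁ with ⟨rfl, hp₁⟩ | ⟨rfl, hq₁⟩ <;> rcases hc₂ with ⟨rfl, hp₂⟩ | ⟨rfl, hq₂⟩
      · exact hne rfl
      · exact Finset.disjoint_left.mp C.disj hp₁ hq₂
      · exact Finset.disjoint_left.mp C.disj hp₂ hq₁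
      · exact hne rfl
    rw [hv₁, hv₂, Finset.disjoint_left]
    intro v hv
    rw [List.mem_toFinset] at hv ⊢
    exact C.pairwiseDisj l₁ hl₁ l₂ hl₂ hll v hv
  · -- covers
    intro v
    obtain ⟨l, hl, hv⟩ := C.covers v
    rcases Finset.mem_union.mp hl with h | h
    · exact ⟨pathNeck l, Finset.mem_union_left _ (Finset.mem_image_of_mem _ h),
        List.mem_toFinset.mpr hv⟩
    · exact ⟨cycNeck l, Finset.mem_union_right _ (Finset.mem_image_of_mem _ h),
        List.mem_toFinset.mpr hv⟩
  · -- invariant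
    intro H hH
    rcases Finset.mem_union.mp hH with h | h
    · obtain ⟨l, hl, rfl⟩ := Finset.mem_image.mp h
      exact Or.inl ⟨pathNeck_rank (C.paths_are l hl).2.1, pathNeck_head_unique (C.paths_are l hl)⟩
    · obtain ⟨l, hl, rfl⟩ := Finset.mem_image.mp h
      exact Or.inr ⟨cycNeck_closed (C.cycles_are l hl), cycNeck_indeg (C.cycles_are l hl)⟩
  · -- sink count
    have hdisjAB : Disjoint A B := by
      rw [Finset.disjoint_left]
      intro K hKA hKB
      obtain ⟨l₁, hl₁, h₁⟩ := Finset.mem_image.mp hKA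
      obtain ⟨l₂, hl₂, h₂⟩ := Finset.mem_image.mp hKB
      have hll : l₁ ≠ l₂ := fun hc => Finset.disjoint_left.mp C.disj hl₁ (hc ▸ hl₂)
      have hvs : l₁.toFinset = l₂.toFinset := by
        have : (pathNeck l₁).1 = (cycNeck l₂).1 := by rw [h₁, h₂]
        exact this
      have hd : _root_.Disjoint l₁.toFinset l₂.toFinset := by
        rw [Finset.disjoint_left]
        intro v hv
        rw [List.mem_toFinset] at hv ⊢
        exact C.pairwiseDisj l₁ (Finset.mem_union_left _ hl₁) l₂
          (Finset.mem_union_right _ hl₂) hll v hv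
      have hne : l₁ ≠ [] := (C.paths_are l₁ hl₁).1
      have : l₁.toFinset = ∅ :=
        Finset.eq_empty_of_forall_notMem
          (fun v hv => Finset.disjoint_left.mp hd hv (hvs ▸ hv))
      cases l₁ with
      | nil => exact hne rfl
      | cons a t => simp at this
    rw [numSinks, Finset.sum_union hdisjAB]
    have h₁ : ∑ H ∈ A, (H.1.filter (fun v => outdeg H.2 v = 0)).card ≤ C.paths.card := by
      rw [hA, Finset.sum_image ?inj]
      case inj =>
        intro l₁ h₁ l₂ h₂ heq
        by_contra hll
        have hd : _root_.Disjoint l₁.toFinset l₂.toFinset := by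
          rw [Finset.disjoint_left]
          intro v hv
          rw [List.mem_toFinset] at hv ⊢
          exact C.pairwiseDisj l₁ (Finset.mem_union_left _ h₁) l₂
            (Finset.mem_union_left _ h₂) hll v hv
        have hvs : l₁.toFinset = l₂.toFinset := congrArg Prod.fst heq
        have hne : l₁ ≠ [] := (C.paths_are l₁ h₁).1
        have : l₁.toFinset = ∅ :=
          Finset.eq_empty_of_forall_notMem
            (fun v hv => Finset.disjoint_left.mp hd hv (hvs ▸ hv))
        cases l₁ with
        | nil => exact hne rfl
        | cons a t => simp at this
      calc ∑ l ∈ C.paths, ((pathNeck l).1.filter (fun v => outdeg (pathNeck l).2 v = 0)).card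
          ≤ ∑ _l ∈ C.paths, 1 :=
            Finset.sum_le_sum (fun l hl => pathNeck_sinks (C.paths_are l hl))
        _ = C.paths.card := by simp
    have h₂ : ∑ H ∈ B, (H.1.filter (fun v => outdeg H.2 v = 0)).card = 0 := by
      apply Finset.sum_eq_zero
      intro K hK
      obtain ⟨l, hl, rfl⟩ := Finset.mem_image.mp hK
      exact cycNeck_sinks (C.cycles_are l hl)
    omega

lemma exists_path_to {F : Finset (V × V)} {S : Finset V}
    (hend : ∀ e ∈ F, e.1 ∈ S ∧ e.2 ∈ S)
    {f : V → ℕ} (hf : ∀ e ∈ F, f e.1 < f e.2)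
    {h : V} (hhead : ∀ v ∈ S, indeg F v = 0 → v = h) :
    ∀ (n : ℕ) (u : V), u ∈ S → f u ≤ n →
      ∃ l : List V, l ≠ [] ∧ l.Nodup ∧ l.Chain' (fun a b => (a, b) ∈ F) ∧
        l.head? = some h ∧ l.getLast? = some u := by
  intro n
  induction n with
  | zero =>
    intro u hu hfu
    by_cases h0 : indeg F u = 0
    · have := hhead u hu h0
      subst this
      exact ⟨[u], by simp, by simp, List.isChain_singleton u, rfl, rfl⟩
    · obtain ⟨w, hw⟩ := exists_in_edge h0
      have := hf _ hw
      simp only at this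
      omega
  | succ n ih =>
    intro u hu hfu
    by_cases h0 : indeg F u = 0
    · have := hhead u hu h0
      subst this
      exact ⟨[u], by simp, by simp, List.isChain_singleton u, rfl, rfl⟩
    · obtain ⟨w, hw⟩ := exists_in_edge h0
      have hlt : f w < f u := hf _ hw
      obtain ⟨l, hl, hnd, hch, hhd, hlast⟩ := ih w (hend _ hw).1 (by omega)
      refine ⟨l ++ [u], by simp, ?_, ?_, ?_, ?_⟩
      · rw [List.nodup_append]
        refine ⟨hnd, by simp, ?_⟩
        intro x hx y hy hxu
        simp only [List.mem_singleton] at hy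
        subst hy
        subst hxu
        have hxle : f x ≤ f (l.getLast hl) := mem_le_getLast l hl
          (List.IsChain.imp (fun a b hab => hf (a, b) hab) hch) x hx
        rw [List.getLast?_eq_getLast hl] at hlast
        have : l.getLast hl = w := Option.some_injective V hlast
        rw [this] at hxle
        omega
      · simp only [List.Chain', List.isChain_append]
        refine ⟨hch, by simp, ?_⟩
        intro x hx y hy
        simp only [List.head?_cons, Option.mem_def, Option.some.injEq] at hy
        subst hy
        rw [hlast] at hx
        simp only [Option.mem_def, Option.some.injEq] at hx
        subst hx
        exact hw
      · rw [List.head?_append_of_ne_nil _ hl]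
        exact hhd
      · rw [List.getLast?_concat]

lemma close_up {E : Finset (V × V)} {H : Finset V × Finset (V × V)}
    (hH : IsNecklace E H) {f : V → ℕ} (hf : ∀ e ∈ H.2, f e.1 < f e.2)
    {h u : V} (huniq : ∀ v ∈ H.1, indeg H.2 v = 0 → v = h) (hu : u ∈ H.1) :
    IsClosedNecklace (H.1, insert (u, h) H.2) := by
  obtain ⟨l, hl, hnd, hch, hhd, hlast⟩ :=
    exists_path_to hH.2.2.1 hf huniq (f u) u hu le_rfl
  refine ⟨l, hl, hnd, ?_, ?_⟩
  · exact List.IsChain.imp (fun a b hab => Finset.mem_insert_of_mem hab) hch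
  · rw [List.head?_eq_head hl] at hhd
    rw [List.getLast?_eq_getLast hl] at hlast
    have h1 : l.head hl = h := Option.some_injective V hhd
    have h2 : l.getLast hl = u := Option.some_injective V hlast
    rw [h1, h2]
    exact Finset.mem_insert_self _ _

lemma open_of_rank {H : Finset V × Finset (V × V)} {f : V → ℕ}
    (hf : ∀ e ∈ H.2, f e.1 < f e.2) : ¬ IsClosedNecklace H := by
  rintro ⟨l, hl⟩
  exact no_dicycle_of_rank hf l hl

lemma r_le_numOpen [Fintype V] {E : Finset (V × V)}
    {D : Finset (Finset V × Finset (V × V))} (hG : Good E D) :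
    (Finset.univ.filter (fun v : V => indeg E v = 0)).card ≤ numOpen D := by
  choose φ hφD hφv using hG.1.2.2
  apply Finset.card_le_card_of_injOn φ
  · intro v hv
    rw [Finset.mem_coe, Finset.mem_filter] at hv
    have hsub : (φ v).2 ⊆ E := (hG.1.1 _ (hφD v)).2.1
    have hdeg : indeg (φ v).2 v = 0 :=
      Nat.le_zero.mp (hv.2 ▸ indeg_mono hsub v)
    rcases hG.2 _ (hφD v) with hl | hr
    · obtain ⟨f, hf⟩ := hl.1
      exact Finset.mem_filter.mpr ⟨hφD v, open_of_rank hf⟩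
    · exact absurd (hr.2 v (hφv v)) (by rw [hdeg]; omega)
  · intro v hv w hw heq
    rw [Finset.coe_filter, Set.mem_setOf_eq] at hv hw
    have hsubv : (φ v).2 ⊆ E := (hG.1.1 _ (hφD v)).2.1
    have hdegv : indeg (φ v).2 v = 0 := Nat.le_zero.mp (hv.2 ▸ indeg_mono hsubv v)
    have hsubw : (φ w).2 ⊆ E := (hG.1.1 _ (hφD w)).2.1
    have hdegw : indeg (φ w).2 w = 0 := Nat.le_zero.mp (hw.2 ▸ indeg_mono hsubw w)
    rcases hG.2 _ (hφD v) with hl | hr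
    · obtain ⟨x, _, hxu⟩ := hl.2
      have h1 := hxu v ⟨hφv v, hdegv⟩
      have h2 := hxu w ⟨heq ▸ hφv w, heq ▸ hdegw⟩
      rw [h1, h2]
    · exact absurd (hr.2 v (hφv v)) (by rw [hdegv]; omega)

lemma exists_bad_head [Fintype V] {E : Finset (V × V)}
    {D : Finset (Finset V × Finset (V × V))} (hG : Good E D)
    (hlt : (Finset.univ.filter (fun v : V => indeg E v = 0)).card < numOpen D) :
    ∃ H ∈ D, ¬ IsClosedNecklace H ∧ ∃ h, (h ∈ H.1 ∧ indeg H.2 h = 0) ∧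
      (∀ w ∈ H.1, indeg H.2 w = 0 → w = h) ∧ indeg E h ≠ 0 := by
  set O := D.filter (fun H => ¬ IsClosedNecklace H) with hO
  have hOne : O.Nonempty := by
    rw [← Finset.card_pos]
    have : numOpen D = O.card := rfl
    omega
  obtain ⟨H₀, hH₀⟩ := hOne
  have hkey : ∀ H ∈ O, ∃ v, (v ∈ H.1 ∧ indeg H.2 v = 0) ∧
      ∀ w ∈ H.1, indeg H.2 w = 0 → w = v := by
    intro H hH
    rw [hO, Finset.mem_filter] at hH
    rcases hG.2 H hH.1 with hl | hr
    · obtain ⟨x, hx, hxu⟩ := hl.2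
      exact ⟨x, hx, fun w hw hw0 => hxu w ⟨hw, hw0⟩⟩
    · exact absurd hr.1 hH.2
  have : Nonempty V := by
    obtain ⟨v, hv, _⟩ := hkey H₀ hH₀
    exact ⟨v⟩
  set ψ : Finset V × Finset (V × V) → V := fun H =>
    if hx : ∃ v, (v ∈ H.1 ∧ indeg H.2 v = 0) ∧ ∀ w ∈ H.1, indeg H.2 w = 0 → w = v
    then hx.choose else Classical.arbitrary V with hψ
  have hψ1 : ∀ H ∈ O, (ψ H ∈ H.1 ∧ indeg H.2 (ψ H) = 0) ∧
      ∀ w ∈ H.1, indeg H.2 w = 0 → w = ψ H := by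
    intro H hH
    have hx := hkey H hH
    rw [hψ]
    simp only [dif_pos hx]
    exact hx.choose_spec
  by_contra hno
  push_neg at hno
  have hmaps : ∀ H ∈ O, ψ H ∈ Finset.univ.filter (fun v : V => indeg E v = 0) := by
    intro H hH
    rw [hO, Finset.mem_filter] at hH
    obtain ⟨⟨hmem, hdeg⟩, huniq⟩ := hψ1 H (by rw [hO, Finset.mem_filter]; exact hH)
    rw [Finset.mem_filter]
    refine ⟨Finset.mem_univ _, ?_⟩
    by_contra hne
    exact hne (hno H hH.1 hH.2 (ψ H) ⟨hmem, hdeg⟩ huniq)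
  have hinj : Set.InjOn ψ O := by
    intro H₁ h₁ H₂ h₂ heq
    rw [Finset.mem_coe] at h₁ h₂
    by_contra hne
    have hd := hG.1.2.1 H₁ (Finset.mem_of_mem_filter _ h₁) H₂ (Finset.mem_of_mem_filter _ h₂) hne
    have m₁ := (hψ1 H₁ h₁).1.1
    have m₂ := (hψ1 H₂ h₂).1.1
    exact Finset.disjoint_left.mp hd m₁ (heq ▸ m₂)
  have := Finset.card_le_card_of_injOn ψ hmaps hinj
  have : numOpen D = O.card := rfl
  omega

lemma dicycle_mono {F F' : Finset (V × V)} (h : F ⊆ F') {l : List V}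
    (hc : IsDiCycle F l) : IsDiCycle F' l := by
  obtain ⟨hl, hnd, hch, hlast⟩ := hc
  exact ⟨hl, hnd, List.IsChain.imp (fun a b hab => h hab) hch, h hlast⟩

lemma step_same {E : Finset (V × V)} {D : Finset (Finset V × Finset (V × V))}
    (hG : Good E D) {H : Finset V × Finset (V × V)} (hH : H ∈ D)
    (hopen : ¬ IsClosedNecklace H)
    {h u : V} (hh : h ∈ H.1) (hh0 : indeg H.2 h = 0)
    (huniq : ∀ w ∈ H.1, indeg H.2 w = 0 → w = h)
    (hu : u ∈ H.1) (he : (u, h) ∈ E) :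
    ∃ D', Good E D' ∧ numOpen D' + 1 = numOpen D ∧ numSinks D' ≤ numSinks D := by
  obtain ⟨⟨hneck, hdisj, hcov⟩, hinv⟩ := hG
  have hHneck := hneck H hH
  obtain ⟨f, hf⟩ : ∃ f : V → ℕ, ∀ e ∈ H.2, f e.1 < f e.2 := by
    rcases hinv H hH with hl | hr
    · exact hl.1
    · exact absurd hr.1 hopen
  set M : Finset V × Finset (V × V) := (H.1, insert (u, h) H.2) with hMdef
  have hnotmem : (u, h) ∉ H.2 := indeg_eq_zero_iff.mp hh0 u
  have hMclosed : IsClosedNecklace M := close_up hHneck hf huniq hu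
  have hMdeg : ∀ v ∈ M.1, indeg M.2 v = 1 := by
    intro v hv
    show indeg (insert (u, h) H.2) v = 1
    rw [indeg_insert hnotmem]
    by_cases hvh : v = h
    · subst hvh
      rw [hh0]
      simp
    · have hle := hHneck.2.2.2.2 v hv
      have hne0 : indeg H.2 v ≠ 0 := fun hc => hvh (huniq v hv hc)
      rw [if_neg (fun hc => hvh (Eq.symm hc))]
      omega
  have hMneck : IsNecklace E M := by
    refine ⟨⟨h, hh⟩, ?_, ?_, ?_, fun v hv => le_of_eq (hMdeg v hv)⟩
    · exact Finset.insert_subset he hHneck.2.1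
    · intro e hE
      rcases Finset.mem_insert.mp hE with rfl | hE
      · exact ⟨hu, hh⟩
      · exact hHneck.2.2.1 e hE
    · intro a ha b hb
      exact wreach_mono (Finset.subset_insert _ _) (hHneck.2.2.2.1 a ha b hb)
  have hMne : M ∉ D := by
    intro hc
    have hne : M ≠ H := fun hMH =>
      hnotmem (hMH ▸ (show (u, h) ∈ M.2 from Finset.mem_insert_self _ _))
    exact Finset.disjoint_left.mp (hdisj M hc H hH hne) (show h ∈ M.1 from hh) hh
  have hMne' : M ∉ D.erase H := fun hc => hMne (Finset.mem_of_mem_erase hc)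
  refine ⟨insert M (D.erase H), ⟨⟨?_, ?_, ?_⟩, ?_⟩, ?_, ?_⟩
  · intro K hK
    rcases Finset.mem_insert.mp hK with rfl | hK
    · exact hMneck
    · exact hneck K (Finset.mem_of_mem_erase hK)
  · intro K₁ h₁ K₂ h₂ hne
    rcases Finset.mem_insert.mp h₁ with rfl | h₁ <;> rcases Finset.mem_insert.mp h₂ with rfl | h₂
    · exact absurd rfl hne
    · exact hdisj H hH K₂ (Finset.mem_of_mem_erase h₂) (Finset.ne_of_mem_erase h₂).symm
    · exact hdisj K₁ (Finset.mem_of_mem_erase h₁) H hH (Finset.ne_of_mem_erase h₁)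
    · exact hdisj K₁ (Finset.mem_of_mem_erase h₁) K₂ (Finset.mem_of_mem_erase h₂) hne
  · intro v
    obtain ⟨K, hK, hvK⟩ := hcov v
    by_cases hKH : K = H
    · subst hKH
      exact ⟨M, Finset.mem_insert_self _ _, hvK⟩
    · exact ⟨K, Finset.mem_insert_of_mem (Finset.mem_erase.mpr ⟨hKH, hK⟩), hvK⟩
  · intro K hK
    rcases Finset.mem_insert.mp hK with rfl | hK
    · exact Or.inr ⟨hMclosed, hMdeg⟩
    · exact hinv K (Finset.mem_of_mem_erase hK)
  · unfold numOpen
    rw [Finset.filter_insert, if_neg (not_not_intro hMclosed), Finset.filter_erase,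
      Finset.card_erase_add_one (Finset.mem_filter.mpr ⟨hH, hopen⟩)]
  · have hsink : (M.1.filter (fun v => outdeg M.2 v = 0)).card ≤
        (H.1.filter (fun v => outdeg H.2 v = 0)).card := by
      apply Finset.card_le_card
      intro v hv
      rw [Finset.mem_filter] at hv ⊢
      refine ⟨hv.1, ?_⟩
      have hm := outdeg_mono (Finset.subset_insert (u, h) H.2) v
      have h2 : outdeg (insert (u, h) H.2) v = 0 := hv.2
      show outdeg H.2 v = 0
      omega
    unfold numSinks
    rw [Finset.sum_insert hMne']
    have hse : ∑ K ∈ D.erase H, (K.1.filter (fun v => outdeg K.2 v = 0)).card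
        + (H.1.filter (fun v => outdeg H.2 v = 0)).card
        = ∑ K ∈ D, (K.1.filter (fun v => outdeg K.2 v = 0)).card :=
      Finset.sum_erase_add D _ hH
    omega

lemma step_diff {E : Finset (V × V)} {D : Finset (Finset V × Finset (V × V))}
    (hG : Good E D) {H H' : Finset V × Finset (V × V)} (hH : H ∈ D) (hH' : H' ∈ D)
    (hHH' : H' ≠ H) (hopen : ¬ IsClosedNecklace H)
    {h u : V} (hh : h ∈ H.1) (hh0 : indeg H.2 h = 0)
    (huniq : ∀ w ∈ H.1, indeg H.2 w = 0 → w = h)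
    (hu : u ∈ H'.1) (he : (u, h) ∈ E) :
    ∃ D', Good E D' ∧ numOpen D' + 1 = numOpen D ∧ numSinks D' ≤ numSinks D := by
  obtain ⟨⟨hneck, hdisj, hcov⟩, hinv⟩ := hG
  have hHneck := hneck H hH
  have hH'neck := hneck H' hH'
  obtain ⟨f, hf⟩ : ∃ f : V → ℕ, ∀ e ∈ H.2, f e.1 < f e.2 := by
    rcases hinv H hH with hl | hr
    · exact hl.1
    · exact absurd hr.1 hopen
  have hvdisj : Disjoint H.1 H'.1 := hdisj H hH H' hH' (Ne.symm hHH')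
  have hedisj : Disjoint H.2 H'.2 := by
    rw [Finset.disjoint_left]
    intro e he1 he2
    exact Finset.disjoint_left.mp hvdisj (hHneck.2.2.1 e he1).1 (hH'neck.2.2.1 e he2).1
  have hunm : (u, h) ∉ H.2 ∪ H'.2 := by
    intro hc
    rcases Finset.mem_union.mp hc with hc | hc
    · exact indeg_eq_zero_iff.mp hh0 u hc
    · exact Finset.disjoint_left.mp hvdisj hh (hH'neck.2.2.1 _ hc).2
  set M : Finset V × Finset (V × V) := (H.1 ∪ H'.1, insert (u, h) (H.2 ∪ H'.2)) with hMdef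
  have hsub1 : H.2 ⊆ M.2 := Finset.Subset.trans Finset.subset_union_left
    (Finset.subset_insert _ _)
  have hsub2 : H'.2 ⊆ M.2 := Finset.Subset.trans Finset.subset_union_right
    (Finset.subset_insert _ _)
  have hMdeg : ∀ v, indeg M.2 v =
      indeg H.2 v + indeg H'.2 v + (if h = v then 1 else 0) := by
    intro v
    show indeg (insert (u, h) (H.2 ∪ H'.2)) v = _
    rw [indeg_insert hunm, indeg_union hedisj]
  have hzero1 : ∀ v ∈ H.1, indeg H'.2 v = 0 := by
    intro v hv
    rw [indeg_eq_zero_iff]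
    intro w hw
    exact Finset.disjoint_left.mp hvdisj hv (hH'neck.2.2.1 _ hw).2
  have hzero2 : ∀ v ∈ H'.1, indeg H.2 v = 0 := by
    intro v hv
    rw [indeg_eq_zero_iff]
    intro w hw
    exact Finset.disjoint_left.mp hvdisj (hHneck.2.2.1 _ hw).2 hv
  have hne_h : ∀ v ∈ H'.1, h ≠ v :=
    fun v hv hc => Finset.disjoint_left.mp hvdisj (hc ▸ hh) hv
  have hnu : u ∉ H.1 := fun hc => Finset.disjoint_left.mp hvdisj hc hu
  have hMdegle : ∀ v ∈ M.1, indeg M.2 v ≤ 1 := by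
    intro v hv
    rw [hMdeg v]
    rcases Finset.mem_union.mp hv with hv | hv
    · rw [hzero1 v hv]
      by_cases hvh : v = h
      · subst hvh
        rw [hh0]
        simp
      · rw [if_neg (fun hc => hvh hc.symm)]
        have := hHneck.2.2.2.2 v hv
        omega
    · rw [hzero2 v hv, if_neg (hne_h v hv)]
      have := hH'neck.2.2.2.2 v hv
      omega
  have hwreachh : ∀ a ∈ M.1, Relation.ReflTransGen
      (fun x y => (x, y) ∈ M.2 ∨ (y, x) ∈ M.2) a h := by
    intro a ha
    rcases Finset.mem_union.mp ha with ha | ha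
    · exact wreach_mono hsub1 (hHneck.2.2.2.1 a ha h hh)
    · have h1 := wreach_mono hsub2 (hH'neck.2.2.2.1 a ha u hu)
      exact h1.trans (Relation.ReflTransGen.single (Or.inl (Finset.mem_insert_self _ _)))
  have hMneck : IsNecklace E M := by
    refine ⟨⟨h, Finset.mem_union_left _ hh⟩, ?_, ?_, ?_, hMdegle⟩
    · exact Finset.insert_subset he (Finset.union_subset hHneck.2.1 hH'neck.2.1)
    · intro e hE
      rcases Finset.mem_insert.mp hE with rfl | hE
      · exact ⟨Finset.mem_union_right _ hu, Finset.mem_union_left _ hh⟩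
      · rcases Finset.mem_union.mp hE with hE | hE
        · exact ⟨Finset.mem_union_left _ (hHneck.2.2.1 e hE).1,
            Finset.mem_union_left _ (hHneck.2.2.1 e hE).2⟩
        · exact ⟨Finset.mem_union_right _ (hH'neck.2.2.1 e hE).1,
            Finset.mem_union_right _ (hH'neck.2.2.1 e hE).2⟩
    · intro a ha b hb
      exact (hwreachh a ha).trans (wreach_symm (hwreachh b hb))
  have hcaseClosed : IsClosedNecklace H' →
      IsClosedNecklace M ∧ ∀ v ∈ M.1, indeg M.2 v = 1 := by
    intro hcl'
    have hdeg1 : ∀ v ∈ H'.1, indeg H'.2 v = 1 := by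
      rcases hinv H' hH' with hl' | hr'
      · obtain ⟨g, hg⟩ := hl'.1
        exact absurd hcl' (open_of_rank hg)
      · exact hr'.2
    refine ⟨?_, ?_⟩
    · obtain ⟨l, hcy⟩ := hcl'
      exact ⟨l, dicycle_mono hsub2 hcy⟩
    · intro v hv
      rw [hMdeg v]
      rcases Finset.mem_union.mp hv with hv | hv
      · rw [hzero1 v hv]
        by_cases hvh : v = h
        · subst hvh
          rw [hh0, if_pos rfl]
        · rw [if_neg (fun hc => hvh hc.symm)]
          have h1 := hHneck.2.2.2.2 v hv
          have h2 : indeg H.2 v ≠ 0 := fun hc => hvh (huniq v hv hc)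
          omega
      · rw [hzero2 v hv, hdeg1 v hv, if_neg (hne_h v hv)]
  have hcaseOpen : ¬ IsClosedNecklace H' →
      (∃ g : V → ℕ, ∀ e ∈ M.2, g e.1 < g e.2) ∧
      (∃! v, v ∈ M.1 ∧ indeg M.2 v = 0) := by
    intro hcl'
    obtain ⟨⟨f', hf'⟩, h', hh'p, hh'u⟩ : ((∃ f' : V → ℕ, ∀ e ∈ H'.2, f' e.1 < f' e.2) ∧
        ∃! v, v ∈ H'.1 ∧ indeg H'.2 v = 0) := by
      rcases hinv H' hH' with hl' | hr'
      · exact hl'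
      · exact absurd hr'.1 hcl'
    constructor
    · refine ⟨fun v => if v ∈ H.1 then f v + f' u + 1 else f' v, ?_⟩
      intro e hE
      rcases Finset.mem_insert.mp hE with rfl | hE
      · show (if u ∈ H.1 then f u + f' u + 1 else f' u) <
            (if h ∈ H.1 then f h + f' u + 1 else f' h)
        rw [if_neg hnu, if_pos hh]
        omega
      · rcases Finset.mem_union.mp hE with hE | hE
        · have h1 := (hHneck.2.2.1 e hE).1
          have h2 := (hHneck.2.2.1 e hE).2
          show (if e.1 ∈ H.1 then f e.1 + f' u + 1 else f' e.1) <
              (if e.2 ∈ H.1 then f e.2 + f' u + 1 else f' e.2)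
          rw [if_pos h1, if_pos h2]
          have := hf e hE
          omega
        · have h1 := (hH'neck.2.2.1 e hE).1
          have h2 := (hH'neck.2.2.1 e hE).2
          show (if e.1 ∈ H.1 then f e.1 + f' u + 1 else f' e.1) <
              (if e.2 ∈ H.1 then f e.2 + f' u + 1 else f' e.2)
          rw [if_neg (fun hc => Finset.disjoint_left.mp hvdisj hc h1),
            if_neg (fun hc => Finset.disjoint_left.mp hvdisj hc h2)]
          exact hf' e hE
    · refine ⟨h', ⟨Finset.mem_union_right _ hh'p.1, ?_⟩, ?_⟩
      · rw [hMdeg h', hzero2 h' hh'p.1, hh'p.2, if_neg (hne_h h' hh'p.1)]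
      · rintro v ⟨hv, hv0⟩
        rw [hMdeg v] at hv0
        rcases Finset.mem_union.mp hv with hvm | hvm
        · exfalso
          by_cases hvh : v = h
          · subst hvh
            rw [if_pos rfl] at hv0
            omega
          · have : indeg H.2 v = 0 := by omega
            exact hvh (huniq v hvm this)
        · have : indeg H'.2 v = 0 := by omega
          exact hh'u v ⟨hvm, this⟩
  have hMnotin : M ∉ D := by
    intro hc
    have hne1 : M ≠ H := by
      intro hMH
      have hum : u ∈ M.1 := Finset.mem_union_right _ hu
      rw [hMH] at hum
      exact hnu hum
    exact Finset.disjoint_left.mp (hdisj M hc H hH hne1) (Finset.mem_union_left _ hh) hh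
  have hH'mem : H' ∈ D.erase H := Finset.mem_erase.mpr ⟨hHH', hH'⟩
  have hMnotin' : M ∉ (D.erase H).erase H' :=
    fun hc => hMnotin (Finset.mem_of_mem_erase (Finset.mem_of_mem_erase hc))
  have hKfacts : ∀ K ∈ (D.erase H).erase H', K ∈ D ∧ K ≠ H ∧ K ≠ H' := by
    intro K hK
    exact ⟨Finset.mem_of_mem_erase (Finset.mem_of_mem_erase hK),
      Finset.ne_of_mem_erase (Finset.mem_of_mem_erase hK), Finset.ne_of_mem_erase hK⟩
  refine ⟨insert M ((D.erase H).erase H'), ⟨⟨?_, ?_, ?_⟩, ?_⟩, ?_, ?_⟩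
  · intro K hK
    rcases Finset.mem_insert.mp hK with rfl | hK
    · exact hMneck
    · exact hneck K (hKfacts K hK).1
  · have hKdis : ∀ K ∈ (D.erase H).erase H', Disjoint M.1 K.1 := by
      intro K hK
      obtain ⟨hKD, hK2, hK1⟩ := hKfacts K hK
      show Disjoint (H.1 ∪ H'.1) K.1
      rw [Finset.disjoint_union_left]
      exact ⟨hdisj H hH K hKD (Ne.symm hK2), hdisj H' hH' K hKD (Ne.symm hK1)⟩
    intro K₁ h₁ K₂ h₂ hne
    rcases Finset.mem_insert.mp h₁ with rfl | h₁ <;> rcases Finset.mem_insert.mp h₂ with rfl | h₂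
    · exact absurd rfl hne
    · exact hKdis K₂ h₂
    · exact (hKdis K₁ h₁).symm
    · exact hdisj K₁ (hKfacts K₁ h₁).1 K₂ (hKfacts K₂ h₂).1 hne
  · intro v
    obtain ⟨K, hK, hvK⟩ := hcov v
    by_cases hKH : K = H
    · subst hKH
      exact ⟨M, Finset.mem_insert_self _ _, Finset.mem_union_left _ hvK⟩
    · by_cases hKH' : K = H'
      · subst hKH'
        exact ⟨M, Finset.mem_insert_self _ _, Finset.mem_union_right _ hvK⟩
      · exact ⟨K, Finset.mem_insert_of_mem
          (Finset.mem_erase.mpr ⟨hKH', Finset.mem_erase.mpr ⟨hKH, hK⟩⟩), hvK⟩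
  · intro K hK
    rcases Finset.mem_insert.mp hK with rfl | hK
    · by_cases hcl' : IsClosedNecklace H'
      · exact Or.inr (hcaseClosed hcl')
      · exact Or.inl (hcaseOpen hcl')
    · exact hinv K (hKfacts K hK).1
  · unfold numOpen
    by_cases hcl' : IsClosedNecklace H'
    · have hMcl : IsClosedNecklace M := (hcaseClosed hcl').1
      rw [Finset.filter_insert, if_neg (not_not_intro hMcl), Finset.filter_erase,
        Finset.filter_erase,
        Finset.erase_eq_of_notMem
          (fun hc : H' ∈ (D.filter (fun K => ¬ IsClosedNecklace K)).erase H =>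
            (Finset.mem_filter.mp (Finset.mem_of_mem_erase hc)).2 hcl'),
        Finset.card_erase_add_one (Finset.mem_filter.mpr ⟨hH, hopen⟩)]
    · obtain ⟨g, hg⟩ := (hcaseOpen hcl').1
      have hMopen : ¬ IsClosedNecklace M := open_of_rank hg
      rw [Finset.filter_insert, if_pos hMopen, Finset.filter_erase, Finset.filter_erase,
        Finset.card_insert_of_notMem (fun hc => hMnotin
          (Finset.mem_of_mem_erase (Finset.mem_of_mem_erase
            (Finset.mem_of_mem_filter M (by
              rwa [← Finset.filter_erase, ← Finset.filter_erase] at hc)))))]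
      have c1 : (((D.filter (fun K => ¬ IsClosedNecklace K)).erase H).erase H').card + 1 =
          ((D.filter (fun K => ¬ IsClosedNecklace K)).erase H).card :=
        Finset.card_erase_add_one
          (Finset.mem_erase.mpr ⟨hHH', Finset.mem_filter.mpr ⟨hH', hcl'⟩⟩)
      have c2 : ((D.filter (fun K => ¬ IsClosedNecklace K)).erase H).card + 1 =
          (D.filter (fun K => ¬ IsClosedNecklace K)).card :=
        Finset.card_erase_add_one (Finset.mem_filter.mpr ⟨hH, hopen⟩)
      omega
  · have hsink : (M.1.filter (fun v => outdeg M.2 v = 0)).card ≤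
        (H.1.filter (fun v => outdeg H.2 v = 0)).card +
        (H'.1.filter (fun v => outdeg H'.2 v = 0)).card := by
      have hsub : M.1.filter (fun v => outdeg M.2 v = 0) ⊆
          (H.1.filter (fun v => outdeg H.2 v = 0)) ∪
          (H'.1.filter (fun v => outdeg H'.2 v = 0)) := by
        intro v hv
        rw [Finset.mem_filter] at hv
        have h0 : outdeg M.2 v = 0 := hv.2
        have m1 := outdeg_mono hsub1 v
        have m2 := outdeg_mono hsub2 v
        rw [Finset.mem_union, Finset.mem_filter, Finset.mem_filter]
        rcases Finset.mem_union.mp hv.1 with hm | hm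
        · exact Or.inl ⟨hm, by omega⟩
        · exact Or.inr ⟨hm, by omega⟩
      exact (Finset.card_le_card hsub).trans (Finset.card_union_le _ _)
    unfold numSinks
    rw [Finset.sum_insert hMnotin']
    have hse1 : ∑ K ∈ (D.erase H).erase H', (K.1.filter (fun v => outdeg K.2 v = 0)).card
        + (H'.1.filter (fun v => outdeg H'.2 v = 0)).card
        = ∑ K ∈ D.erase H, (K.1.filter (fun v => outdeg K.2 v = 0)).card :=
      Finset.sum_erase_add _ _ hH'mem
    have hse2 : ∑ K ∈ D.erase H, (K.1.filter (fun v => outdeg K.2 v = 0)).card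
        + (H.1.filter (fun v => outdeg H.2 v = 0)).card
        = ∑ K ∈ D, (K.1.filter (fun v => outdeg K.2 v = 0)).card :=
      Finset.sum_erase_add _ _ hH
    omega

end Aux

theorem stmt17 [Fintype V] (E : Finset (V × V)) (C : PCCover E) :
    ∃ D : Finset (Finset V × Finset (V × V)), IsNecklaceCover E D ∧
      numOpen D = (Finset.univ.filter (fun v : V => indeg E v = 0)).card ∧
      numLeaves D ≤
        C.paths.card - (Finset.univ.filter (fun v : V => indeg E v = 0)).card := by
  classical
  set r := (Finset.univ.filter (fun v : V => indeg E v = 0)).card with hr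
  obtain ⟨D₀, hG₀, hS₀⟩ := initial_good C
  have main : ∀ (n : ℕ) (D : Finset (Finset V × Finset (V × V))), Good E D →
      numOpen D ≤ n →
      ∃ D', Good E D' ∧ numOpen D' = r ∧ numSinks D' ≤ numSinks D := by
    intro n
    induction n with
    | zero =>
      intro D hG hle
      have := r_le_numOpen hG
      exact ⟨D, hG, by omega, le_rfl⟩
    | succ n ih =>
      intro D hG hle
      have hge := r_le_numOpen hG
      by_cases heq : numOpen D = r
      · exact ⟨D, hG, heq, le_rfl⟩
      · have hlt : r < numOpen D := by omega
        obtain ⟨H, hH, hHopen, h, ⟨hhmem, hh0⟩, huniq, hEne⟩ := exists_bad_head hG hlt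
        obtain ⟨u, hu⟩ := exists_in_edge hEne
        by_cases huH : u ∈ H.1
        · obtain ⟨D', hG', hcount, hsink⟩ :=
            step_same hG hH hHopen hhmem hh0 huniq huH hu
          obtain ⟨D'', hG'', h2, h3⟩ := ih D' hG' (by omega)
          exact ⟨D'', hG'', h2, h3.trans hsink⟩
        · obtain ⟨H', hH', hu'⟩ := hG.1.2.2 u
          have hne : H' ≠ H := fun hc => huH (hc ▸ hu')
          obtain ⟨D', hG', hcount, hsink⟩ :=
            step_diff hG hH hH' hne hHopen hhmem hh0 huniq hu' hu
          obtain ⟨D'', hG'', h2, h3⟩ := ih D' hG' (by omega)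
          exact ⟨D'', hG'', h2, h3.trans hsink⟩
  obtain ⟨D', hG', hOpen, hSink⟩ := main (numOpen D₀) D₀ hG₀ le_rfl
  refine ⟨D', hG'.1, hOpen, ?_⟩
  unfold numLeaves
  rw [hOpen]
  have hps : numSinks D' ≤ C.paths.card := le_trans hSink hS₀
  omega
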